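/- Let R be a rooted set in ℝ² with root r (an open line segment), and suppose the first level L₁ = vis(r,R) equals R (i.e., every point of R sees some point of r). Then R lies entirely in one of the two closed half-planes determined by the supporting line of r. -/

import Mathlib

set_option maxHeartbeats 1000000


/-- `A` and `B` can be joined by a polygonal line inside `X`. -/
def PolyConn (X : Set (ℝ × ℝ)) (A B : ℝ × ℝ) : Prop :=
  A ∈ X ∧ B ∈ X ∧ ∃ n, ∃ f : Fin (n + 1) → ℝ × ℝ, f 0 = A ∧ f (Fin.last n) = B ∧
    ∀ i : Fin n, segment ℝ (f i.castSucc) (f i.succ) ⊆ X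

/-- `S` is half-open: each point of `S` has a disc neighborhood either contained in `S`
or split by a diameter into the closed half-disc `S ∩ ball` (including the diameter)
and the open half-disc outside `S`. -/
def IsHalfOpen (S : Set (ℝ × ℝ)) : Prop :=
  ∀ A ∈ S, ∃ ε > 0, Metric.ball A ε ⊆ S ∨
    ∃ f : (ℝ × ℝ) →ₗ[ℝ] ℝ, f ≠ 0 ∧
      Metric.ball A ε ∩ S = {x ∈ Metric.ball A ε | 0 ≤ f (x - A)}

/-- A rooted set `R` with root `r`: bounded, polygonally connected, simply connected,
half-open, with `R ∩ ∂R = r` an open line segment. -/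
def IsRootedSet (R r : Set (ℝ × ℝ)) : Prop :=
  Bornology.IsBounded R ∧ (∀ A ∈ R, ∀ B ∈ R, PolyConn R A B) ∧
    SimplyConnectedSpace R ∧ IsHalfOpen R ∧
    (∃ a b : ℝ × ℝ, a ≠ b ∧ r = openSegment ℝ a b) ∧ R ∩ frontier R = r

lemma functional_factor (d : ℝ × ℝ) (hd : d ≠ 0) (f : (ℝ × ℝ) →ₗ[ℝ] ℝ)
    (hfd : f d = 0) : ∃ lam : ℝ, ∀ x, f x = lam * (d.1 * x.2 - d.2 * x.1) := by
  have hx : ∀ x : ℝ × ℝ, f x = x.1 * f (1, 0) + x.2 * f (0, 1) := by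
    intro x
    have : x = x.1 • ((1 : ℝ), (0 : ℝ)) + x.2 • ((0 : ℝ), (1 : ℝ)) := by
      ext <;> simp
    conv_lhs => rw [this, map_add, map_smul, map_smul]
    simp [mul_comm]
  have hn : d.1 ^ 2 + d.2 ^ 2 ≠ 0 := by
    intro h
    apply hd
    have h1 : d.1 = 0 := by nlinarith [sq_nonneg d.1, sq_nonneg d.2]
    have h2 : d.2 = 0 := by nlinarith [sq_nonneg d.1, sq_nonneg d.2]
    exact Prod.ext h1 h2
  have hd0 : d.1 * f (1, 0) + d.2 * f (0, 1) = 0 := by rw [← hx d, hfd]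
  refine ⟨(f (0, 1) * d.1 - f (1, 0) * d.2) / (d.1 ^ 2 + d.2 ^ 2), fun x => ?_⟩
  rw [hx x]
  field_simp
  linear_combination (x.1 * d.1 + x.2 * d.2) * hd0


/-- If `R` is a rooted set with root `r` and every point of `R` sees some
point of `r` in `R`, then `R` lies in one closed half-plane bounded by the supporting
line of `r`. -/
theorem rooted_set_half_plane (R r : Set (ℝ × ℝ)) (hR : IsRootedSet R r)
    (hvis : ∀ A ∈ R, ∃ B ∈ r, segment ℝ A B ⊆ R) :
    ∃ f : (ℝ × ℝ) →ₗ[ℝ] ℝ, f ≠ 0 ∧ (∀ p ∈ r, ∀ q ∈ r, f p = f q) ∧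
      ∀ x ∈ R, ∀ p ∈ r, f p ≤ f x := by
  obtain ⟨-, -, -, hho, ⟨a, b, hab, hr⟩, hfr⟩ := hR
  set d : ℝ × ℝ := b - a with hd_def
  have hd : d ≠ 0 := sub_ne_zero.mpr (Ne.symm hab)
  have hdn : 0 < ‖d‖ := norm_pos_iff.mpr hd
  set g : (ℝ × ℝ) →ₗ[ℝ] ℝ := d.1 • LinearMap.snd ℝ ℝ ℝ - d.2 • LinearMap.fst ℝ ℝ ℝ
    with hg_def
  have hg_apply : ∀ x : ℝ × ℝ, g x = d.1 * x.2 - d.2 * x.1 := by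
    intro x
    simp [hg_def, mul_comm]
  have hn : (0 : ℝ) < d.1 ^ 2 + d.2 ^ 2 := by
    have : ¬(d.1 = 0 ∧ d.2 = 0) := fun h => hd (Prod.ext h.1 h.2)
    rcases not_and_or.mp this with h | h <;> positivity
  have hgd : g d = 0 := by rw [hg_apply]; ring
  have hgne : g ≠ 0 := by
    intro h
    have h2 := hg_apply (-d.2, d.1)
    rw [h] at h2
    simp at h2
    nlinarith
  have hra : r ⊆ R := hfr ▸ Set.inter_subset_left
  have hrf : r ⊆ frontier R := hfr ▸ Set.inter_subset_right
  have hgconst : ∀ p ∈ r, g p = g a := by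
    intro p hp
    rw [hr, openSegment_eq_image'] at hp
    obtain ⟨t, -, rfl⟩ := hp
    rw [← hd_def, map_add, map_smul, hgd]
    simp
  -- key local structure at each point of the root
  have key : ∀ B ∈ r, ∃ ε > 0, ∃ lam : ℝ, lam ≠ 0 ∧
      ∀ x ∈ Metric.ball B ε, (x ∈ R ↔ 0 ≤ lam * (g x - g a)) := by
    intro B hB
    obtain ⟨ε, hε, hcase⟩ := hho B (hra hB)
    rcases hcase with hball | ⟨f, hf0, hfeq⟩
    · exfalso
      exact (hrf hB).2 (mem_interior.mpr
        ⟨Metric.ball B ε, hball, Metric.isOpen_ball, Metric.mem_ball_self hε⟩)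
    have hmem : ∀ x ∈ Metric.ball B ε, (x ∈ R ↔ 0 ≤ f (x - B)) := by
      intro x hx
      constructor
      · intro hxR
        have h1 : x ∈ Metric.ball B ε ∩ R := ⟨hx, hxR⟩
        rw [hfeq] at h1
        exact h1.2
      · intro hfx
        have h1 : x ∈ {x ∈ Metric.ball B ε | 0 ≤ f (x - B)} := ⟨hx, hfx⟩
        rw [← hfeq] at h1
        exact h1.2
    obtain ⟨t, ht, hBeq⟩ : ∃ t ∈ Set.Ioo (0 : ℝ) 1, B = a + t • d := by
      have hB' := hB
      rw [hr, openSegment_eq_image'] at hB'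
      obtain ⟨t, ht, h⟩ := hB'
      exact ⟨t, ht, by rw [← h, ← hd_def]⟩
    set s : ℝ := min (min t (1 - t)) (ε / ‖d‖) / 2 with hs_def
    have hst : min (min t (1 - t)) (ε / ‖d‖) ≤ t :=
      le_trans (min_le_left _ _) (min_le_left _ _)
    have hst' : min (min t (1 - t)) (ε / ‖d‖) ≤ 1 - t :=
      le_trans (min_le_left _ _) (min_le_right _ _)
    have hsε : min (min t (1 - t)) (ε / ‖d‖) ≤ ε / ‖d‖ := min_le_right _ _
    have hs : 0 < s := by
      have h1 : 0 < ε / ‖d‖ := div_pos hε hdn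
      have h2 : 0 < min (min t (1 - t)) (ε / ‖d‖) :=
        lt_min (lt_min ht.1 (by linarith [ht.2])) h1
      rw [hs_def]; linarith
    have hmemball : ∀ u : ℝ, |u| ≤ s → B + u • d ∈ Metric.ball B ε := by
      intro u hu
      rw [Metric.mem_ball, dist_eq_norm, add_sub_cancel_left, norm_smul,
        Real.norm_eq_abs]
      have h1 : |u| * ‖d‖ ≤ s * ‖d‖ := mul_le_mul_of_nonneg_right hu hdn.le
      have h2 : s * ‖d‖ < ε := by
        have h3 : s < ε / ‖d‖ := by rw [hs_def]; linarith [div_pos hε hdn]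
        calc s * ‖d‖ < (ε / ‖d‖) * ‖d‖ := by nlinarith
          _ = ε := by field_simp
      linarith
    have hmemr : ∀ u : ℝ, |u| ≤ s → B + u • d ∈ r := by
      intro u hu
      obtain ⟨hu1, hu2⟩ := abs_le.mp hu
      rw [hr, openSegment_eq_image']
      refine ⟨t + u, ⟨by cases ht with | intro h1 h2 => rw [hs_def] at hu1; linarith,
        by cases ht with | intro h1 h2 => rw [hs_def] at hu2; linarith⟩, ?_⟩
      show a + (t + u) • (b - a) = B + u • d
      rw [← hd_def, hBeq, add_smul, ← add_assoc]
    have hfd : f d = 0 := by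
      have h1 : 0 ≤ f (s • d) := by
        have hm := (hmem (B + s • d) (hmemball s (by rw [abs_of_pos hs]))).mp
          (hra (hmemr s (by rw [abs_of_pos hs])))
        simpa using hm
      have h2 : 0 ≤ f (-(s • d)) := by
        have habs : |(-s)| ≤ s := by rw [abs_neg, abs_of_pos hs]
        have hm := (hmem (B + (-s) • d) (hmemball (-s) habs)).mp
          (hra (hmemr (-s) habs))
        simpa [neg_smul] using hm
      rw [map_neg] at h2
      rw [map_smul, smul_eq_mul] at h1 h2
      nlinarith
    obtain ⟨lam, hlam⟩ := functional_factor d hd f hfd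
    refine ⟨ε, hε, lam, ?_, ?_⟩
    · intro h0
      apply hf0
      apply LinearMap.ext
      intro x
      rw [hlam x, h0]
      simp
    · intro x hx
      rw [hmem x hx]
      have heq : f (x - B) = lam * (g x - g B) := by
        rw [hlam, hg_apply, hg_apply]
        simp only [Prod.fst_sub, Prod.snd_sub]
        ring
      rw [heq, hgconst B hB]
  choose! ε hε lam hlam hiff using key
  -- sign of lam at a seen root point
  have sign_sees : ∀ x ∈ R, ∀ C, ∀ hC : C ∈ r, segment ℝ x C ⊆ R →
      0 ≤ lam C * (g x - g a) := by
    intro x hx C hC hseg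
    by_cases hxC : x = C
    · subst hxC
      rw [hgconst x hC]
      simp
    · have hnorm : 0 < ‖x - C‖ := by
        rw [norm_pos_iff, sub_ne_zero]; exact hxC
      set t : ℝ := min 1 (ε C / (2 * ‖x - C‖)) with ht_def
      have htp : 0 < t := lt_min one_pos (div_pos (hε C hC) (by positivity))
      have ht1 : t ≤ 1 := min_le_left _ _
      set P : ℝ × ℝ := C + t • (x - C) with hP_def
      have hPball : P ∈ Metric.ball C (ε C) := by
        rw [Metric.mem_ball, dist_eq_norm, hP_def, add_sub_cancel_left, norm_smul,
          Real.norm_eq_abs, abs_of_pos htp]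
        have h1 : t ≤ ε C / (2 * ‖x - C‖) := min_le_right _ _
        have h2 : t * ‖x - C‖ ≤ (ε C / (2 * ‖x - C‖)) * ‖x - C‖ :=
          mul_le_mul_of_nonneg_right h1 hnorm.le
        have h3 : (ε C / (2 * ‖x - C‖)) * ‖x - C‖ = ε C / 2 := by field_simp
        have h4 : 0 < ε C := hε C hC
        linarith
      have hPseg : P ∈ segment ℝ x C := by
        rw [segment_symm, segment_eq_image']
        exact ⟨t, ⟨htp.le, ht1⟩, rfl⟩
      have hPR : P ∈ R := hseg hPseg
      have hstep := (hiff C hC P hPball).mp hPR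
      have hgP : g P = g a + t * (g x - g a) := by
        rw [hP_def, map_add, map_smul, map_sub, smul_eq_mul, hgconst C hC]
      rw [hgP] at hstep
      by_contra hneg
      push_neg at hneg
      nlinarith [mul_neg_of_pos_of_neg htp hneg]
  by_cases hcase : ∀ x ∈ R, g a ≤ g x
  · exact ⟨g, hgne, fun p hp q hq => by rw [hgconst p hp, hgconst q hq],
      fun x hx p hp => by rw [hgconst p hp]; exact hcase x hx⟩
  push_neg at hcase
  obtain ⟨x₀, hx₀R, hx₀⟩ := hcase
  obtain ⟨C₀, hC₀, hseg₀⟩ := hvis x₀ hx₀R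
  have hlamneg : lam C₀ < 0 := by
    have h := sign_sees x₀ hx₀R C₀ hC₀ hseg₀
    rcases (hlam C₀ hC₀).lt_or_gt with h' | h'
    · exact h'
    · exfalso; nlinarith
  have hall : ∀ x ∈ R, g x ≤ g a := by
    intro x hxR
    by_contra hgt
    push_neg at hgt
    obtain ⟨C₁, hC₁, hseg₁⟩ := hvis x hxR
    have hlampos : 0 < lam C₁ := by
      have h := sign_sees x hxR C₁ hC₁ hseg₁
      rcases (hlam C₁ hC₁).lt_or_gt with h' | h'
      · exfalso; nlinarith
      · exact h'
    -- connectedness of the root gives a contradiction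
    set U : Set (ℝ × ℝ) :=
      ⋃ (B : ℝ × ℝ) (_ : B ∈ r) (_ : 0 < lam B), Metric.ball B (ε B) with hU_def
    set V : Set (ℝ × ℝ) :=
      ⋃ (B : ℝ × ℝ) (_ : B ∈ r) (_ : lam B < 0), Metric.ball B (ε B) with hV_def
    have hUopen : IsOpen U :=
      isOpen_iUnion fun B => isOpen_iUnion fun _ => isOpen_iUnion fun _ =>
        Metric.isOpen_ball
    have hVopen : IsOpen V :=
      isOpen_iUnion fun B => isOpen_iUnion fun _ => isOpen_iUnion fun _ =>
        Metric.isOpen_ball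
    have hpre : IsPreconnected r := by
      rw [hr]; exact (convex_openSegment a b).isPreconnected
    have hsub : r ⊆ U ∪ V := by
      intro B hB
      rcases (hlam B hB).lt_or_gt with h | h
      · right
        rw [hV_def]
        simp only [Set.mem_iUnion]
        exact ⟨B, hB, h, Metric.mem_ball_self (hε B hB)⟩
      · left
        rw [hU_def]
        simp only [Set.mem_iUnion]
        exact ⟨B, hB, h, Metric.mem_ball_self (hε B hB)⟩
    have hUne : (r ∩ U).Nonempty := by
      refine ⟨C₁, hC₁, ?_⟩
      rw [hU_def]
      simp only [Set.mem_iUnion]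
      exact ⟨C₁, hC₁, hlampos, Metric.mem_ball_self (hε C₁ hC₁)⟩
    have hVne : (r ∩ V).Nonempty := by
      refine ⟨C₀, hC₀, ?_⟩
      rw [hV_def]
      simp only [Set.mem_iUnion]
      exact ⟨C₀, hC₀, hlamneg, Metric.mem_ball_self (hε C₀ hC₀)⟩
    obtain ⟨z, hzr, hzU, hzV⟩ := hpre U V hUopen hVopen hsub hUne hVne
    rw [hU_def] at hzU
    rw [hV_def] at hzV
    simp only [Set.mem_iUnion] at hzU hzV
    obtain ⟨Bp, hBp, hlp, hzp⟩ := hzU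
    obtain ⟨Bn, hBn, hln, hzn⟩ := hzV
    -- test point just above z
    set e : ℝ × ℝ := (-d.2, d.1) with he_def
    have hge : g e = d.1 ^ 2 + d.2 ^ 2 := by rw [hg_apply, he_def]; ring
    have hge0 : 0 < g e := by rw [hge]; exact hn
    have hene : e ≠ 0 := fun h => by
      rw [h] at hge; simp at hge; nlinarith
    have hen : 0 < ‖e‖ := norm_pos_iff.mpr hene
    set δ : ℝ := min (ε Bp - dist z Bp) (ε Bn - dist z Bn) / (2 * ‖e‖) with hδ_def
    have hzpd : dist z Bp < ε Bp := Metric.mem_ball.mp hzp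
    have hznd : dist z Bn < ε Bn := Metric.mem_ball.mp hzn
    have hδ : 0 < δ := by
      rw [hδ_def]
      apply div_pos (lt_min (by linarith) (by linarith)) (by positivity)
    set P : ℝ × ℝ := z + δ • e with hP_def
    have hdistPz : dist P z = δ * ‖e‖ := by
      rw [hP_def, dist_eq_norm, add_sub_cancel_left, norm_smul, Real.norm_eq_abs,
        abs_of_pos hδ]
    have hδe : δ * ‖e‖ = min (ε Bp - dist z Bp) (ε Bn - dist z Bn) / 2 := by
      rw [hδ_def]; field_simp
    have hPp : P ∈ Metric.ball Bp (ε Bp) := by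
      rw [Metric.mem_ball]
      calc dist P Bp ≤ dist P z + dist z Bp := dist_triangle _ _ _
        _ < ε Bp := by
          rw [hdistPz, hδe]
          have h1 : min (ε Bp - dist z Bp) (ε Bn - dist z Bn) ≤ ε Bp - dist z Bp :=
            min_le_left _ _
          have h2 : 0 < min (ε Bp - dist z Bp) (ε Bn - dist z Bn) :=
            lt_min (by linarith) (by linarith)
          linarith
    have hPn : P ∈ Metric.ball Bn (ε Bn) := by
      rw [Metric.mem_ball]
      calc dist P Bn ≤ dist P z + dist z Bn := dist_triangle _ _ _
        _ < ε Bn := by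
          rw [hdistPz, hδe]
          have h1 : min (ε Bp - dist z Bp) (ε Bn - dist z Bn) ≤ ε Bn - dist z Bn :=
            min_le_right _ _
          have h2 : 0 < min (ε Bp - dist z Bp) (ε Bn - dist z Bn) :=
            lt_min (by linarith) (by linarith)
          linarith
    have hgP : g P - g a = δ * g e := by
      rw [hP_def, map_add, map_smul, smul_eq_mul, hgconst z hzr]
      ring
    have hPR : P ∈ R := by
      rw [hiff Bp hBp P hPp, hgP]
      nlinarith [mul_pos hlp (mul_pos hδ hge0)]
    have hcontra := (hiff Bn hBn P hPn).mp hPR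
    rw [hgP] at hcontra
    nlinarith [mul_neg_of_neg_of_pos hln (mul_pos hδ hge0)]
  exact ⟨-g, neg_ne_zero.mpr hgne,
    fun p hp q hq => by simp only [LinearMap.neg_apply]; rw [hgconst p hp, hgconst q hq],
    fun x hx p hp => by
      simp only [LinearMap.neg_apply, neg_le_neg_iff]
      rw [hgconst p hp]
      exact hall x hx⟩
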